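/- arXiv:1008.3213 — 2 statements merged into one kernel-verified Lean document; each statement's English description precedes it below -/
import Mathlib

section
/- Let G be a finite bipartite graph with at least one edge and probability weights μ. Then ᾱ(G^n) ≥ 1/2 for every n, where ᾱ(G^n) is the maximum product measure of an independent set in the tensor power G^n; consequently lim_{n→∞} ᾱ(G^n) ∈ {1/2, 1}. -/
open Finset Filter

/-- `I` is an independent set of vertices in `G`. -/
def IsIndepSet {V : Type*} (G : SimpleGraph V) (I : Finset V) : Prop :=
  ∀ u ∈ I, ∀ v ∈ I, ¬ G.Adj u v

/-- The neighborhood `N(I)`: vertices adjacent to at least one vertex of `I`. -/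
noncomputable def nbhd {V : Type*} [Fintype V] (G : SimpleGraph V) (I : Finset V) : Finset V :=
  @Finset.filter _ (fun v => ∃ u ∈ I, G.Adj u v) (Classical.decPred _) Finset.univ

/-- Measure of a finite set of vertices: sum of the weights. -/
def fmeas {V : Type*} (μ : V → ℝ) (S : Finset V) : ℝ := ∑ v ∈ S, μ v

/-- The `n`-fold tensor (categorical) power of `G`. -/
def tpow {V : Type*} (G : SimpleGraph V) (n : ℕ) : SimpleGraph (Fin n → V) where
  Adj u v := u ≠ v ∧ ∀ i, G.Adj (u i) (v i)
  symm := ⟨fun u v h => ⟨h.1.symm, fun i => (h.2 i).symm⟩⟩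
  loopless := ⟨fun u h => h.1 rfl⟩

/-- Product measure of a set of `n`-tuples. -/
noncomputable def pmeas {V : Type*} (μ : V → ℝ) (n : ℕ) (S : Finset (Fin n → V)) : ℝ :=
  ∑ x ∈ S, ∏ i, μ (x i)

/-- `ᾱ(G)`: the supremum (= maximum) of the measures of independent sets of `G`. -/
noncomputable def alphaBar {V : Type*} (G : SimpleGraph V) (μ : V → ℝ) : ℝ :=
  sSup {x : ℝ | ∃ I : Finset V, IsIndepSet G I ∧ x = fmeas μ I}

/-- `ᾱ(G^n)` with the product measure. -/
noncomputable def alphaPow {V : Type*} (G : SimpleGraph V) (μ : V → ℝ) (n : ℕ) : ℝ :=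
  alphaBar (tpow G n) (fun x => ∏ i, μ (x i))

/-! ### Auxiliary lemmas -/

lemma sum_prod_pi {W : Type*} [Fintype W] {k : ℕ} (g : Fin k → W → ℝ) :
    ∑ x : Fin k → W, ∏ j, g j (x j) = ∏ j, ∑ w, g j w :=
  (Fintype.prod_sum g).symm

section Aux

variable {V : Type*} [Fintype V] [DecidableEq V]

lemma total_one (μ : V → ℝ) (hμ1 : ∑ v, μ v = 1) (n : ℕ) :
    ∑ x : Fin n → V, ∏ i, μ (x i) = 1 := by
  rw [sum_prod_pi (fun _ v => μ v)]
  simp [hμ1]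

/-- The set of achievable independent-set measures in `G^n`. -/
def ASet (G : SimpleGraph V) (μ : V → ℝ) (n : ℕ) : Set ℝ :=
  {x : ℝ | ∃ I : Finset (Fin n → V), IsIndepSet (tpow G n) I ∧ x = pmeas μ n I}

lemma alphaPow_eq (G : SimpleGraph V) (μ : V → ℝ) (n : ℕ) :
    alphaPow G μ n = sSup (ASet G μ n) := rfl

lemma ASet_nonempty (G : SimpleGraph V) (μ : V → ℝ) (n : ℕ) : (ASet G μ n).Nonempty :=
  ⟨0, ∅, fun u hu => absurd hu (Finset.notMem_empty u), by simp [pmeas]⟩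

lemma ASet_finite (G : SimpleGraph V) (μ : V → ℝ) (n : ℕ) : (ASet G μ n).Finite := by
  apply Set.Finite.subset (Set.finite_range (fun I => pmeas μ n I))
  rintro x ⟨I, -, rfl⟩
  exact ⟨I, rfl⟩

lemma le_alphaPow (G : SimpleGraph V) (μ : V → ℝ) (n : ℕ) {I : Finset (Fin n → V)}
    (hI : IsIndepSet (tpow G n) I) : pmeas μ n I ≤ alphaPow G μ n :=
  le_csSup (ASet_finite G μ n).bddAbove ⟨I, hI, rfl⟩

lemma alphaPow_mem (G : SimpleGraph V) (μ : V → ℝ) (n : ℕ) :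
    alphaPow G μ n ∈ ASet G μ n :=
  (ASet_nonempty G μ n).csSup_mem (ASet_finite G μ n)

lemma pmeas_le_one (μ : V → ℝ) (hμ0 : ∀ v, 0 ≤ μ v) (hμ1 : ∑ v, μ v = 1) (n : ℕ)
    (S : Finset (Fin n → V)) : pmeas μ n S ≤ 1 := by
  rw [← total_one μ hμ1 n]
  exact Finset.sum_le_sum_of_subset_of_nonneg (Finset.subset_univ S)
    (fun x _ _ => Finset.prod_nonneg fun i _ => hμ0 _)

lemma alphaPow_le_one (G : SimpleGraph V) (μ : V → ℝ) (hμ0 : ∀ v, 0 ≤ μ v)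
    (hμ1 : ∑ v, μ v = 1) (n : ℕ) : alphaPow G μ n ≤ 1 := by
  rw [alphaPow_eq]
  refine csSup_le (ASet_nonempty G μ n) ?_
  rintro x ⟨I, -, rfl⟩
  exact pmeas_le_one μ hμ0 hμ1 n I

/-- The equivalence between `Fin (3*n) → V` and triples of blocks. -/
def tripleEquiv (n : ℕ) : (Fin (3 * n) → V) ≃ (Fin 3 → Fin n → V) where
  toFun x j i := x (finProdFinEquiv (j, i))
  invFun X t := X (finProdFinEquiv.symm t).1 (finProdFinEquiv.symm t).2
  left_inv x := funext fun t => congrArg x (finProdFinEquiv.apply_symm_apply t)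
  right_inv X := funext fun j => funext fun i => by simp

lemma half_le_part (G : SimpleGraph V) (μ : V → ℝ)
    (hμ0 : ∀ v, 0 ≤ μ v) (hμ1 : ∑ v, μ v = 1)
    (X Y : Finset V) (hXY : Disjoint X Y) (hcover : X ∪ Y = Finset.univ)
    (hbip : ∀ u v, G.Adj u v → (u ∈ X ∧ v ∈ Y) ∨ (u ∈ Y ∧ v ∈ X))
    (n : ℕ) : 1 / 2 ≤ alphaPow G μ n := by
  have hpq : fmeas μ X + fmeas μ Y = 1 := by
    rw [fmeas, fmeas, ← Finset.sum_union hXY, hcover, hμ1]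
  obtain ⟨P, hPhalf, hPX⟩ : ∃ P : Finset V, 1 / 2 ≤ fmeas μ P ∧ (P = X ∨ P = Y) := by
    by_cases h : 1 / 2 ≤ fmeas μ X
    · exact ⟨X, h, Or.inl rfl⟩
    · exact ⟨Y, by linarith, Or.inr rfl⟩
  have hPind : ∀ u ∈ P, ∀ v ∈ P, ¬ G.Adj u v := by
    intro u hu v hv hadj
    rcases hbip u v hadj with ⟨h1, h2⟩ | ⟨h1, h2⟩ <;> rcases hPX with rfl | rfl
    · exact Finset.disjoint_left.mp hXY hv h2
    · exact Finset.disjoint_left.mp hXY h1 hu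
    · exact Finset.disjoint_left.mp hXY hu h1
    · exact Finset.disjoint_left.mp hXY h2 hv
  cases n with
  | zero =>
      have h1 : (1 : ℝ) ≤ alphaPow G μ 0 := by
        have hind : IsIndepSet (tpow G 0) Finset.univ := by
          intro u _ v _ hadj
          exact hadj.1 (funext fun i => i.elim0)
        have := le_alphaPow G μ 0 hind
        rwa [show pmeas μ 0 (Finset.univ) = 1 from total_one μ hμ1 0] at this
      linarith
  | succ m =>
      set Iset : Finset (Fin (m + 1) → V) :=
        Finset.filter (fun x => x 0 ∈ P) Finset.univ with hIset
      have hind : IsIndepSet (tpow G (m + 1)) Iset := by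
        intro u hu v hv hadj
        rw [hIset, Finset.mem_filter] at hu hv
        exact hPind _ hu.2 _ hv.2 (hadj.2 0)
      have hmeas : pmeas μ (m + 1) Iset = fmeas μ P := by
        set g : Fin (m + 1) → V → ℝ :=
          fun i v => if i = 0 then (if v ∈ P then μ v else 0) else μ v with hg
        have step : pmeas μ (m + 1) Iset = ∑ x : Fin (m + 1) → V, ∏ i, g i (x i) := by
          rw [pmeas, hIset, Finset.sum_filter]
          refine Finset.sum_congr rfl fun x _ => ?_
          by_cases h : x 0 ∈ P
          · rw [if_pos h]
            refine Finset.prod_congr rfl fun i _ => ?_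
            by_cases hi : i = 0
            · subst hi; simp [hg, h]
            · simp [hg, hi]
          · rw [if_neg h]
            symm
            apply Finset.prod_eq_zero (Finset.mem_univ 0)
            simp [hg, h]
        rw [step, sum_prod_pi g, Fin.prod_univ_succ]
        have h0 : ∑ v, g 0 v = fmeas μ P := by
          rw [fmeas]
          simp only [hg, if_pos rfl]
          rw [Finset.sum_ite_mem, Finset.univ_inter]
        have hs : ∀ i : Fin m, ∑ v, g i.succ v = 1 := by
          intro i
          simp only [hg, Fin.succ_ne_zero i, if_false]
          exact hμ1
        rw [h0]
        rw [Finset.prod_congr rfl fun i _ => hs i]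
        simp
      have := le_alphaPow G μ (m + 1) hind
      rw [hmeas] at this
      linarith

lemma amplify (G : SimpleGraph V) (μ : V → ℝ)
    (hμ0 : ∀ v, 0 ≤ μ v) (hμ1 : ∑ v, μ v = 1) (n : ℕ) :
    3 * alphaPow G μ n ^ 2 - 2 * alphaPow G μ n ^ 3 ≤ alphaPow G μ (3 * n) := by
  obtain ⟨I, hI, haI⟩ := alphaPow_mem G μ n
  set a := pmeas μ n I with ha
  set w : (Fin n → V) → ℝ := fun z => ∏ i, μ (z i) with hw
  set b : (Fin n → V) → ℝ := fun z => if z ∈ I then 1 else 0 with hb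
  have hwb : ∑ z, w z * b z = a := by
    simp only [hb, mul_ite, mul_one, mul_zero]
    rw [Finset.sum_ite_mem, Finset.univ_inter]
    rfl
  have hw1 : ∑ z, w z = 1 := total_one μ hμ1 n
  set E := (tripleEquiv (V := V) n) with hE
  set J : Finset (Fin (3 * n) → V) :=
    Finset.filter (fun x => 2 ≤ (Finset.filter (fun j => E x j ∈ I) Finset.univ).card)
      Finset.univ with hJ
  have hJind : IsIndepSet (tpow G (3 * n)) J := by
    intro x hx y hy hadj
    obtain ⟨hne, hadj⟩ := hadj
    rcases Nat.eq_zero_or_pos n with rfl | hn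
    · exact hne (funext fun t => absurd t.isLt (by simp))
    · have hblk : ∀ j : Fin 3, (tpow G n).Adj (E x j) (E y j) := by
        intro j
        refine ⟨?_, fun i => hadj (finProdFinEquiv (j, i))⟩
        intro hEq
        have h1 : G.Adj (E x j ⟨0, hn⟩) (E y j ⟨0, hn⟩) := hadj (finProdFinEquiv (j, ⟨0, hn⟩))
        rw [hEq] at h1
        exact G.loopless.irrefl _ h1
      have hdisj : Disjoint (Finset.filter (fun j => E x j ∈ I) Finset.univ)
          (Finset.filter (fun j => E y j ∈ I) Finset.univ) := by
        rw [Finset.disjoint_left]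
        intro j hjx hjy
        rw [Finset.mem_filter] at hjx hjy
        exact hI _ hjx.2 _ hjy.2 (hblk j)
      have hcard : (Finset.filter (fun j => E x j ∈ I) Finset.univ).card
          + (Finset.filter (fun j => E y j ∈ I) Finset.univ).card ≤ 3 := by
        rw [← Finset.card_union_of_disjoint hdisj]
        calc _ ≤ (Finset.univ : Finset (Fin 3)).card := Finset.card_le_univ _
        _ = 3 := by simp
      rw [hJ, Finset.mem_filter] at hx hy
      omega
  have key : ∀ g0 g1 g2 : (Fin n → V) → ℝ,
      ∑ X : Fin 3 → Fin n → V, g0 (X 0) * g1 (X 1) * g2 (X 2)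
        = (∑ z, g0 z) * (∑ z, g1 z) * (∑ z, g2 z) := by
    intro g0 g1 g2
    have h := sum_prod_pi (W := Fin n → V) ![g0, g1, g2]
    simpa [Fin.prod_univ_three] using h
  have hind : ∀ X : Fin 3 → Fin n → V,
      (if 2 ≤ (Finset.filter (fun j => X j ∈ I) Finset.univ).card then (1 : ℝ) else 0)
        = b (X 0) * b (X 1) + b (X 0) * b (X 2) + b (X 1) * b (X 2)
          - 2 * (b (X 0) * b (X 1) * b (X 2)) := by
    intro X
    rw [Finset.card_filter, Fin.sum_univ_three]
    simp only [hb]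
    by_cases h0 : X 0 ∈ I <;> by_cases h1 : X 1 ∈ I <;> by_cases h2 : X 2 ∈ I <;>
      simp [h0, h1, h2] <;> norm_num
  have step1 : pmeas μ (3 * n) J
      = ∑ X : Fin 3 → Fin n → V,
          (if 2 ≤ (Finset.filter (fun j => X j ∈ I) Finset.univ).card
            then ∏ j, w (X j) else 0) := by
    rw [pmeas, hJ, Finset.sum_filter]
    refine Fintype.sum_equiv E _ _ (fun x => ?_)
    have hprod : ∏ t, μ (x t) = ∏ j, w (E x j) := by
      rw [← Equiv.prod_comp (finProdFinEquiv : Fin 3 × Fin n ≃ Fin (3 * n))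
        (fun t => μ (x t)), Fintype.prod_prod_type]
      rfl
    rw [hprod]
  have step2 : pmeas μ (3 * n) J = 3 * a ^ 2 - 2 * a ^ 3 := by
    rw [step1]
    have e1 := key (fun z => w z * b z) (fun z => w z * b z) w
    have e2 := key (fun z => w z * b z) w (fun z => w z * b z)
    have e3 := key w (fun z => w z * b z) (fun z => w z * b z)
    have e4 := key (fun z => w z * b z) (fun z => w z * b z) (fun z => w z * b z)
    have hpt : ∀ X : Fin 3 → Fin n → V,
        (if 2 ≤ (Finset.filter (fun j => X j ∈ I) Finset.univ).card
          then ∏ j, w (X j) else 0)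
        = w (X 0) * b (X 0) * (w (X 1) * b (X 1)) * w (X 2)
          + w (X 0) * b (X 0) * w (X 1) * (w (X 2) * b (X 2))
          + w (X 0) * (w (X 1) * b (X 1)) * (w (X 2) * b (X 2))
          - 2 * (w (X 0) * b (X 0) * (w (X 1) * b (X 1)) * (w (X 2) * b (X 2))) := by
      intro X
      have : (if 2 ≤ (Finset.filter (fun j => X j ∈ I) Finset.univ).card
          then ∏ j, w (X j) else 0)
          = (∏ j, w (X j)) *
            (if 2 ≤ (Finset.filter (fun j => X j ∈ I) Finset.univ).card
              then (1 : ℝ) else 0) := by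
        split_ifs <;> simp
      rw [this, hind X, Fin.prod_univ_three]
      ring
    rw [Finset.sum_congr rfl fun X _ => hpt X]
    rw [Finset.sum_sub_distrib, Finset.sum_add_distrib, Finset.sum_add_distrib,
      ← Finset.mul_sum]
    rw [e1, e2, e3, e4, hwb, hw1]
    ring
  have := le_alphaPow G μ (3 * n) hJind
  rw [step2, ← haI] at this
  exact this

end Aux

theorem stmt_6 {V : Type*} [Fintype V] [DecidableEq V] (G : SimpleGraph V) (μ : V → ℝ)
    (hμ0 : ∀ v, 0 ≤ μ v) (hμ1 : ∑ v, μ v = 1)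
    (X Y : Finset V) (hXY : Disjoint X Y) (hcover : X ∪ Y = Finset.univ)
    (hbip : ∀ u v, G.Adj u v → (u ∈ X ∧ v ∈ Y) ∨ (u ∈ Y ∧ v ∈ X))
    (hedge : ∃ u v, G.Adj u v) :
    (∀ n : ℕ, 1 / 2 ≤ alphaPow G μ n) ∧
    (∀ L : ℝ, Tendsto (fun n => alphaPow G μ n) atTop (nhds L) →
      L = 1 / 2 ∨ L = 1) := by
  have part1 : ∀ n : ℕ, 1 / 2 ≤ alphaPow G μ n :=
    fun n => half_le_part G μ hμ0 hμ1 X Y hXY hcover hbip n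
  refine ⟨part1, fun L hL => ?_⟩
  have h1 : 1 / 2 ≤ L := ge_of_tendsto' hL part1
  have h2 : L ≤ 1 := le_of_tendsto' hL (fun n => alphaPow_le_one G μ hμ0 hμ1 n)
  have h3 : Tendsto (fun n => alphaPow G μ (3 * n)) atTop (nhds L) :=
    hL.comp (tendsto_atTop_mono (fun n => by omega : ∀ n : ℕ, n ≤ 3 * n) tendsto_id)
  have h4 : Tendsto (fun n => 3 * alphaPow G μ n ^ 2 - 2 * alphaPow G μ n ^ 3) atTop
      (nhds (3 * L ^ 2 - 2 * L ^ 3)) :=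
    (tendsto_const_nhds.mul (hL.pow 2)).sub (tendsto_const_nhds.mul (hL.pow 3))
  have h5 : 3 * L ^ 2 - 2 * L ^ 3 ≤ L :=
    le_of_tendsto_of_tendsto' h4 h3 (fun n => amplify G μ hμ0 hμ1 n)
  by_contra hc
  push_neg at hc
  obtain ⟨hc1, hc2⟩ := hc
  have hL1 : 1 / 2 < L := lt_of_le_of_ne h1 (Ne.symm hc1)
  have hL2 : L < 1 := lt_of_le_of_ne h2 hc2
  nlinarith [mul_pos (mul_pos (show (0:ℝ) < L by linarith)
    (show (0:ℝ) < 2 * L - 1 by linarith)) (show (0:ℝ) < 1 - L by linarith)]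
end

section
/- Let G be a finite graph with probability weights and H a finite vertex transitive graph (with uniform measure) admitting a measure preserving homomorphism H → G. Then lim_{n→∞} ᾱ(G^n) ≤ ᾱ(H). -/
open Finset Filter

noncomputable instance gIsoFintype {V : Type*} [Fintype V] (G H : SimpleGraph V) :
    Fintype (G ≃g H) :=
  letI := Classical.decEq V
  Fintype.ofInjective (RelIso.toEquiv) RelIso.toEquiv_injective

lemma fiber_card {α β : Type*} [Fintype α] (g : α → β) (T : Finset β) :
    (@Finset.filter _ (fun x => g x ∈ T) (Classical.decPred _) Finset.univ).card
      = ∑ y ∈ T, (@Finset.filter _ (fun x => g x = y) (Classical.decPred _) Finset.univ).card := by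
  classical
  have h2 := Finset.card_eq_sum_card_fiberwise
    (s := @Finset.filter _ (fun x => g x ∈ T) (Classical.decPred _) Finset.univ) (t := T) (f := g)
    (fun x hx => by simp only [Finset.mem_coe, Finset.mem_filter] at hx; exact hx.2)
  rw [h2]
  refine Finset.sum_congr rfl fun y hy => congrArg Finset.card ?_
  ext x
  simp only [Finset.mem_filter, Finset.mem_univ, true_and]
  exact ⟨fun h => h.2, fun h => ⟨h ▸ hy, h⟩⟩

lemma fiber_card_pi {α : Type*} [Fintype α] (n : ℕ) (p : Fin n → α → Prop) :
    (@Finset.filter _ (fun x : Fin n → α => ∀ i, p i (x i)) (Classical.decPred _) Finset.univ).card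
      = ∏ i, (@Finset.filter _ (fun a => p i a) (Classical.decPred _) Finset.univ).card := by
  classical
  have heq : (@Finset.filter _ (fun x : Fin n → α => ∀ i, p i (x i)) (Classical.decPred _) Finset.univ)
      = Fintype.piFinset (fun i => @Finset.filter _ (fun a => p i a) (Classical.decPred _) Finset.univ) := by
    ext x; simp [Fintype.mem_piFinset]
  rw [heq, Fintype.card_piFinset]

lemma alphaBar_set_finite {V : Type*} [Fintype V] (G : SimpleGraph V) (μ : V → ℝ) :
    {x : ℝ | ∃ I : Finset V, IsIndepSet G I ∧ x = fmeas μ I}.Finite := by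
  have hsub : {x : ℝ | ∃ I : Finset V, IsIndepSet G I ∧ x = fmeas μ I}
      ⊆ (fun I : Finset V => fmeas μ I) '' Set.univ := by
    rintro x ⟨I, _, rfl⟩; exact ⟨I, trivial, rfl⟩
  exact (Set.finite_univ.image _).subset hsub

lemma fmeas_le_alphaBar {V : Type*} [Fintype V] (G : SimpleGraph V) (μ : V → ℝ) {I : Finset V}
    (hI : IsIndepSet G I) : fmeas μ I ≤ alphaBar G μ :=
  le_csSup (alphaBar_set_finite G μ).bddAbove ⟨I, hI, rfl⟩

lemma alphaBar_le {V : Type*} [Fintype V] (G : SimpleGraph V) (μ : V → ℝ) {b : ℝ}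
    (hb : ∀ I, IsIndepSet G I → fmeas μ I ≤ b) : alphaBar G μ ≤ b := by
  refine csSup_le ⟨0, ∅, fun u hu => absurd hu (Finset.notMem_empty u), by simp [fmeas]⟩ ?_
  rintro x ⟨I, hI, rfl⟩; exact hb I hI

lemma aut_fiber_const {V : Type*} [Fintype V] (H : SimpleGraph V)
    (htrans : ∀ u v : V, ∃ φ : H ≃g H, φ u = v) (x w x' w' : V) :
    (@Finset.filter _ (fun σ : H ≃g H => σ x = w) (Classical.decPred _) Finset.univ).card
      = (@Finset.filter _ (fun σ : H ≃g H => σ x' = w') (Classical.decPred _) Finset.univ).card := by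
  classical
  obtain ⟨ρ, hρ⟩ := htrans x' x
  obtain ⟨τ, hτ⟩ := htrans w w'
  refine Finset.card_bij' (fun σ _ => (ρ.trans σ).trans τ)
    (fun σ _ => (ρ.symm.trans σ).trans τ.symm) ?_ ?_ ?_ ?_
  · intro σ hσ
    simp only [Finset.mem_filter, Finset.mem_univ, true_and] at hσ ⊢
    simp [RelIso.trans_apply, hρ, hσ, hτ]
  · intro σ hσ
    simp only [Finset.mem_filter, Finset.mem_univ, true_and] at hσ ⊢
    have : ρ.symm x = x' := by rw [← hρ]; simp
    simp [RelIso.trans_apply, this, hσ, ← hτ]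
  · intro σ hσ
    ext a
    simp [RelIso.trans_apply]
  · intro σ hσ
    ext a
    simp [RelIso.trans_apply]


lemma key_count {V : Type*} [Fintype V] (H : SimpleGraph V)
    (htrans : ∀ u v : V, ∃ φ : H ≃g H, φ u = v) (n : ℕ) (S : Finset (Fin n → V))
    (x₀ : V) :
    ∑ φ : Fin n → (H ≃g H),
        (@Finset.filter _ (fun x : V => (fun i => φ i x) ∈ S) (Classical.decPred _) Finset.univ).card
      = Fintype.card V * (S.card *
          (@Finset.filter _ (fun σ : H ≃g H => σ x₀ = x₀) (Classical.decPred _) Finset.univ).card ^ n) := by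
  classical
  have swap : ∑ φ : Fin n → (H ≃g H),
        (@Finset.filter _ (fun x : V => (fun i => φ i x) ∈ S) (Classical.decPred _) Finset.univ).card
      = ∑ x : V, (@Finset.filter _ (fun φ : Fin n → (H ≃g H) => (fun i => φ i x) ∈ S)
          (Classical.decPred _) Finset.univ).card := by
    simp only [Finset.card_filter]
    exact Finset.sum_comm
  rw [swap]
  have hx : ∀ x : V, (@Finset.filter _ (fun φ : Fin n → (H ≃g H) => (fun i => φ i x) ∈ S)
      (Classical.decPred _) Finset.univ).card
      = S.card * (@Finset.filter _ (fun σ : H ≃g H => σ x₀ = x₀) (Classical.decPred _) Finset.univ).card ^ n := by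
    intro x
    rw [fiber_card (fun φ : Fin n → (H ≃g H) => (fun i => φ i x)) S]
    rw [Finset.sum_congr rfl (fun y _ => ?_), Finset.sum_const, smul_eq_mul]
    have : (@Finset.filter _ (fun φ : Fin n → (H ≃g H) => (fun i => φ i x) = y)
        (Classical.decPred _) Finset.univ)
        = (@Finset.filter _ (fun φ : Fin n → (H ≃g H) => ∀ i, φ i x = y i)
        (Classical.decPred _) Finset.univ) := by
      ext φ; simp [funext_iff]
    rw [this, fiber_card_pi n (fun (i : Fin n) (σ : H ≃g H) => σ x = y i),
      Finset.prod_congr rfl (fun i _ => aut_fiber_const H htrans x (y i) x₀ x₀),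
      Finset.prod_const, Finset.card_univ, Fintype.card_fin]
  rw [Finset.sum_congr rfl (fun x _ => hx x), Finset.sum_const, Finset.card_univ, smul_eq_mul]

lemma key {VH : Type*} [Fintype VH] [Nonempty VH] (H : SimpleGraph VH)
    (htrans : ∀ u v : VH, ∃ φ : H ≃g H, φ u = v) (n : ℕ) (hn : 0 < n)
    (S : Finset (Fin n → VH)) (hS : IsIndepSet (tpow H n) S) :
    pmeas (fun _ => (1 : ℝ) / Fintype.card VH) n S
      ≤ alphaBar H (fun _ => (1 : ℝ) / Fintype.card VH) := by
  classical
  set c := Fintype.card VH with hc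
  have hc0 : 0 < c := Fintype.card_pos
  have hcR : (0:ℝ) < (c:ℝ) := by exact_mod_cast hc0
  obtain ⟨x₀⟩ := ‹Nonempty VH›
  set k := (@Finset.filter _ (fun σ : H ≃g H => σ x₀ = x₀) (Classical.decPred _) Finset.univ).card
    with hk
  set α := alphaBar H (fun _ => (1 : ℝ) / (c:ℝ)) with hα
  have hck : c * k = Fintype.card (H ≃g H) := by
    have h1 : Fintype.card (H ≃g H)
        = ∑ v : VH, (@Finset.filter _ (fun σ : H ≃g H => σ x₀ = v)
            (Classical.decPred _) Finset.univ).card := by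
      rw [← Finset.card_univ (α := H ≃g H)]
      exact Finset.card_eq_sum_card_fiberwise (fun σ _ => Finset.mem_univ _)
    have h2 : ∀ v : VH, (@Finset.filter _ (fun σ : H ≃g H => σ x₀ = v)
        (Classical.decPred _) Finset.univ).card = k :=
      fun v => aut_fiber_const H htrans x₀ v x₀ x₀
    rw [h1, Finset.sum_congr rfl (fun v _ => h2 v), Finset.sum_const, Finset.card_univ,
      smul_eq_mul, mul_comm]
  have hA0 : 0 < Fintype.card (H ≃g H) := @Fintype.card_pos _ _ ⟨RelIso.refl _⟩
  have hk0 : 0 < k := by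
    rcases Nat.eq_zero_or_pos k with h0 | h
    · rw [h0, mul_zero] at hck; omega
    · exact h
  have hkR : (0:ℝ) < (k:ℝ) := by exact_mod_cast hk0
  have hind : ∀ φ : Fin n → (H ≃g H), IsIndepSet H
      (@Finset.filter _ (fun x : VH => (fun i => φ i x) ∈ S) (Classical.decPred _) Finset.univ) := by
    intro φ u hu v hv hadj
    simp only [Finset.mem_filter] at hu hv
    have hu' : (fun i => φ i u) ∈ S := hu.2
    have hv' : (fun i => φ i v) ∈ S := hv.2
    refine hS _ hu' _ hv' ⟨?_, fun i => (φ i).map_rel_iff.mpr hadj⟩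
    intro hEq
    exact hadj.ne ((φ ⟨0, hn⟩).injective (congrFun hEq ⟨0, hn⟩))
  have hIb : ∀ φ : Fin n → (H ≃g H),
      (((@Finset.filter _ (fun x : VH => (fun i => φ i x) ∈ S)
        (Classical.decPred _) Finset.univ).card : ℝ)) ≤ (c:ℝ) * α := by
    intro φ
    have h3 := fmeas_le_alphaBar H (fun _ => (1 : ℝ) / (c:ℝ)) (hind φ)
    have h4 : fmeas (fun _ => (1 : ℝ) / (c:ℝ))
        (@Finset.filter _ (fun x : VH => (fun i => φ i x) ∈ S) (Classical.decPred _) Finset.univ)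
        = ((@Finset.filter _ (fun x : VH => (fun i => φ i x) ∈ S)
          (Classical.decPred _) Finset.univ).card : ℝ) * ((1:ℝ)/(c:ℝ)) := by
      simp [fmeas, Finset.sum_const, nsmul_eq_mul]
    rw [h4, mul_one_div, div_le_iff₀ hcR] at h3
    calc (((@Finset.filter _ (fun x : VH => (fun i => φ i x) ∈ S)
        (Classical.decPred _) Finset.univ).card : ℝ)) ≤ α * (c:ℝ) := h3
      _ = (c:ℝ) * α := mul_comm _ _
  have hsum : (c:ℝ) * ((S.card : ℝ) * (k:ℝ)^n)
      ≤ ((c:ℝ) * (k:ℝ))^n * ((c:ℝ) * α) := by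
    have hcount := key_count H htrans n S x₀
    have hl : (∑ φ : Fin n → (H ≃g H),
        ((@Finset.filter _ (fun x : VH => (fun i => φ i x) ∈ S)
          (Classical.decPred _) Finset.univ).card : ℝ))
        = (c:ℝ) * ((S.card : ℝ) * (k:ℝ)^n) := by
      exact_mod_cast congrArg (Nat.cast (R := ℝ)) hcount
    calc (c:ℝ) * ((S.card : ℝ) * (k:ℝ)^n)
        = ∑ φ : Fin n → (H ≃g H),
            ((@Finset.filter _ (fun x : VH => (fun i => φ i x) ∈ S)
              (Classical.decPred _) Finset.univ).card : ℝ) := hl.symm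
      _ ≤ ∑ _φ : Fin n → (H ≃g H), (c:ℝ) * α :=
          Finset.sum_le_sum (fun φ _ => hIb φ)
      _ = (Fintype.card (Fin n → (H ≃g H)) : ℝ) * ((c:ℝ) * α) := by
          rw [Finset.sum_const, Finset.card_univ, nsmul_eq_mul]
      _ = ((c:ℝ) * (k:ℝ))^n * ((c:ℝ) * α) := by
          rw [Fintype.card_fun, Fintype.card_fin]
          push_cast [← hck]
          ring
  have hSc : (S.card : ℝ) ≤ (c:ℝ)^n * α := by
    have hpos : (0:ℝ) < (k:ℝ)^n * (c:ℝ) := by positivity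
    refine (mul_le_mul_iff_of_pos_right hpos).mp ?_
    calc (S.card : ℝ) * ((k:ℝ)^n * (c:ℝ)) = (c:ℝ) * ((S.card : ℝ) * (k:ℝ)^n) := by ring
      _ ≤ ((c:ℝ) * (k:ℝ))^n * ((c:ℝ) * α) := hsum
      _ = ((c:ℝ)^n * α) * ((k:ℝ)^n * (c:ℝ)) := by rw [mul_pow]; ring
  have hP : pmeas (fun _ => (1 : ℝ) / (c:ℝ)) n S = (S.card : ℝ) * ((1:ℝ)/(c:ℝ))^n := by
    simp [pmeas, Finset.prod_const, Finset.card_univ, Fintype.card_fin, Finset.sum_const,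
      nsmul_eq_mul]
  rw [hP]
  have h6 : (S.card : ℝ) * ((1:ℝ)/(c:ℝ))^n ≤ ((c:ℝ)^n * α) * ((1:ℝ)/(c:ℝ))^n :=
    mul_le_mul_of_nonneg_right hSc (by positivity)
  have h7 : ((c:ℝ)^n * α) * ((1:ℝ)/(c:ℝ))^n = α := by
    rw [one_div, inv_pow, mul_comm ((c:ℝ)^n) α, mul_assoc,
      mul_inv_cancel₀ (by positivity : ((c:ℝ)^n) ≠ 0), mul_one]
  rw [h7] at h6
  exact h6

theorem stmt_18 {VH VG : Type*} [Fintype VH] [Nonempty VH] [Fintype VG]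
    (H : SimpleGraph VH) (G : SimpleGraph VG)
    (μG : VG → ℝ) (hμG0 : ∀ v, 0 ≤ μG v) (hμG1 : ∑ v, μG v = 1)
    (htrans : ∀ u v : VH, ∃ φ : H ≃g H, φ u = v)
    (h : VH → VG)
    (hhom : ∀ u v, H.Adj u v → G.Adj (h u) (h v))
    (hmp : ∀ S : Finset VG,
      fmeas (fun _ => (1 : ℝ) / Fintype.card VH)
          (@Finset.filter _ (fun x => h x ∈ S) (Classical.decPred _) Finset.univ)
        = fmeas μG S)
    (L : ℝ) (hL : Tendsto (fun n => alphaPow G μG n) atTop (nhds L)) :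
    L ≤ alphaBar H (fun _ => (1 : ℝ) / Fintype.card VH) := by
  classical
  have hfib : ∀ v : VG,
      ((@Finset.filter _ (fun a : VH => h a = v) (Classical.decPred _) Finset.univ).card : ℝ)
        * ((1:ℝ) / (Fintype.card VH : ℝ)) = μG v := by
    intro v
    have h1 := hmp {v}
    have h2 : fmeas μG {v} = μG v := by simp [fmeas]
    have h4 : (@Finset.filter _ (fun x => h x ∈ ({v} : Finset VG)) (Classical.decPred _)
          Finset.univ)
        = (@Finset.filter _ (fun a : VH => h a = v) (Classical.decPred _) Finset.univ) := by
      ext a; simp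
    rw [h4, h2] at h1
    rw [← h1]
    simp [fmeas, Finset.sum_const, nsmul_eq_mul]
  have hn1 : ∀ n : ℕ, 1 ≤ n →
      alphaPow G μG n ≤ alphaBar H (fun _ => (1 : ℝ) / Fintype.card VH) := by
    intro n hn
    refine alphaBar_le _ _ ?_
    intro I hI
    set S : Finset (Fin n → VH) :=
      @Finset.filter _ (fun x : Fin n → VH => (fun i => h (x i)) ∈ I) (Classical.decPred _)
        Finset.univ with hSdef
    have hSind : IsIndepSet (tpow H n) S := by
      intro u hu v hv hadj
      simp only [hSdef, Finset.mem_filter] at hu hv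
      refine hI _ hu.2 _ hv.2 ⟨?_, fun i => hhom _ _ (hadj.2 i)⟩
      intro hEq
      exact (hhom _ _ (hadj.2 ⟨0, hn⟩)).ne (congrFun hEq ⟨0, hn⟩)
    have hcard : S.card = ∑ y ∈ I, ∏ i,
        (@Finset.filter _ (fun a : VH => h a = y i) (Classical.decPred _) Finset.univ).card := by
      refine (fiber_card (fun x : Fin n → VH => (fun i => h (x i))) I).trans
        (Finset.sum_congr rfl fun y _ => ?_)
      have heq : (@Finset.filter _ (fun x : Fin n → VH => (fun i => h (x i)) = y)
            (Classical.decPred _) Finset.univ)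
          = (@Finset.filter _ (fun x : Fin n → VH => ∀ i, h (x i) = y i)
            (Classical.decPred _) Finset.univ) := by
        ext x; simp [funext_iff]
      rw [heq]
      exact fiber_card_pi n (fun i a => h a = y i)
    have hmeas : fmeas (fun x : Fin n → VG => ∏ i, μG (x i)) I
        = pmeas (fun _ => (1 : ℝ) / Fintype.card VH) n S := by
      have hR : pmeas (fun _ => (1 : ℝ) / Fintype.card VH) n S
          = (S.card : ℝ) * ((1:ℝ)/(Fintype.card VH : ℝ))^n := by
        simp [pmeas, Finset.prod_const, Finset.card_univ, Fintype.card_fin, Finset.sum_const,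
          nsmul_eq_mul]
      rw [hR, hcard]
      push_cast
      rw [Finset.sum_mul]
      simp only [fmeas]
      refine Finset.sum_congr rfl fun y _ => ?_
      rw [← Finset.prod_congr rfl (fun i (_ : i ∈ Finset.univ) => hfib (y i)),
        Finset.prod_mul_distrib, Finset.prod_const, Finset.card_univ, Fintype.card_fin]
    have := key H htrans n hn S hSind
    calc fmeas (fun x : Fin n → VG => ∏ i, μG (x i)) I
        = pmeas (fun _ => (1 : ℝ) / Fintype.card VH) n S := hmeas
      _ ≤ alphaBar H (fun _ => (1 : ℝ) / Fintype.card VH) := this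
  exact le_of_tendsto hL ((eventually_ge_atTop 1).mono fun n hn => hn1 n hn)
end
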